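/- If f : ℝ → ℂ is almost automorphic and g ∈ L¹(ℝ), then the convolution f ∗ g, defined by (f ∗ g)(x) = ∫_ℝ f(x − y) g(y) dy, is almost automorphic. -/
import Mathlib


open Filter MeasureTheory

/-- A continuous function `f : ℝ → ℂ` is almost automorphic if for every sequence of reals
there is a subsequence along which the translates converge pointwise to some `g`, and the
back-translates of `g` converge pointwise to `f`. -/
def AlmostAutomorphic (f : ℝ → ℂ) : Prop :=
  Continuous f ∧ ∀ s : ℕ → ℝ, ∃ σ : ℕ → ℕ, StrictMono σ ∧ ∃ g : ℝ → ℂ,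
    (∀ x : ℝ, Tendsto (fun k => f (x + s (σ k))) atTop (nhds (g x))) ∧
    (∀ x : ℝ, Tendsto (fun k => g (x - s (σ k))) atTop (nhds (f x)))

/-- An almost automorphic function is bounded. -/
lemma aa_bounded {f : ℝ → ℂ} (hf : AlmostAutomorphic f) : ∃ M : ℝ, ∀ x, ‖f x‖ ≤ M := by
  by_contra h
  push_neg at h
  choose s hs using fun n : ℕ => h n
  obtain ⟨σ, hσ, g, hg1, -⟩ := hf.2 s
  have h0 : Tendsto (fun k => ‖f (0 + s (σ k))‖) atTop (nhds ‖g 0‖) := (hg1 0).norm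
  have h1 : Tendsto (fun k => ‖f (0 + s (σ k))‖) atTop atTop := by
    refine tendsto_atTop_mono (fun k => ?_) (tendsto_natCast_atTop_atTop.comp hσ.tendsto_atTop)
    simpa [zero_add] using (hs (σ k)).le
  exact not_tendsto_atTop_of_tendsto_nhds h0 h1

/-- The convolution of an almost automorphic function with an integrable function is
almost automorphic. -/
theorem almostAutomorphic_convolution_integrable (f g : ℝ → ℂ)
    (hf : AlmostAutomorphic f)
    (hg : Integrable g) :
    AlmostAutomorphic (fun x => ∫ y : ℝ, f (x - y) * g y) := by
  obtain ⟨M, hM⟩ := aa_bounded hf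
  have hbint : Integrable (fun y => M * ‖g y‖) := hg.norm.const_mul M
  constructor
  · rw [continuous_iff_continuousAt]
    intro x₀
    refine tendsto_integral_filter_of_dominated_convergence (fun y => M * ‖g y‖)
      (Eventually.of_forall fun x => ?_) (Eventually.of_forall fun x => ?_) hbint
      (Eventually.of_forall fun y => ?_)
    · exact ((hf.1.comp (continuous_const.sub continuous_id)).aestronglyMeasurable).mul
        hg.aestronglyMeasurable
    · exact Eventually.of_forall fun y => by
        rw [norm_mul]; exact mul_le_mul_of_nonneg_right (hM _) (norm_nonneg _)
    · exact (((hf.1.comp (continuous_id.sub continuous_const)).mul continuous_const).tendsto x₀)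
  · intro s
    obtain ⟨σ, hσ, h, hh1, hh2⟩ := hf.2 s
    have hhM : ∀ z, ‖h z‖ ≤ M :=
      fun z => le_of_tendsto (hh1 z).norm (Eventually.of_forall fun k => hM _)
    refine ⟨σ, hσ, fun x => ∫ y, h (x - y) * g y, fun x => ?_, fun x => ?_⟩
    · refine tendsto_integral_of_dominated_convergence (fun y => M * ‖g y‖)
        (fun k => ((hf.1.comp (continuous_const.sub continuous_id)).aestronglyMeasurable).mul
          hg.aestronglyMeasurable) hbint
        (fun k => Eventually.of_forall fun y => by
          rw [norm_mul]; exact mul_le_mul_of_nonneg_right (hM _) (norm_nonneg _))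
        (Eventually.of_forall fun y => ?_)
      have := (hh1 (x - y)).mul (tendsto_const_nhds (x := g y))
      simpa [add_sub_right_comm] using this
    · refine tendsto_integral_of_dominated_convergence (fun y => M * ‖g y‖)
        (fun k => ?_) hbint
        (fun k => Eventually.of_forall fun y => by
          rw [norm_mul]; exact mul_le_mul_of_nonneg_right (hhM _) (norm_nonneg _))
        (Eventually.of_forall fun y => ?_)
      · have hmeas : AEStronglyMeasurable (fun y => h (x - s (σ k) - y)) volume := by
          exact aestronglyMeasurable_of_tendsto_ae (atTop : Filter ℕ)
            (f := fun m (y : ℝ) => f ((x - s (σ k) - y) + s (σ m)))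
            (fun m => (hf.1.comp ((continuous_const.sub continuous_id).add
              continuous_const)).aestronglyMeasurable)
            (Eventually.of_forall fun y => hh1 (x - s (σ k) - y))
        exact hmeas.mul hg.aestronglyMeasurable
      · have := (hh2 (x - y)).mul (tendsto_const_nhds (x := g y))
        simpa [sub_right_comm] using this
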